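/- arXiv:2106.15562 — 3 statements merged into one kernel-verified Lean document; each statement's English description precedes it below -/
import Mathlib

section
/- A map f : V → W between vector spaces over a field k of characteristic 0 such that for every linear functional φ ∈ W* the composition φ ∘ f restricts to a polynomial of degree ≤ d on every finite-dimensional subspace of V, satisfies: for every finite-dimensional subspace V' ⊆ V, the span of f(V') is finite-dimensional, of dimension at most dim Sym_{≤d}((V')*). -/
/-- `g : V → k` restricts to a polynomial function of degree at most `d` on every
finite-dimensional subspace of `V`: on the span of any finite tuple of vectors, `g` is
given in coordinates by a polynomial of total degree at most `d`. -/
def RestrictsToPolyDeg (k : Type) [Field k] {V : Type} [AddCommGroup V] [Module k V]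
    (d : ℕ) (g : V → k) : Prop :=
  ∀ (m : ℕ) (v : Fin m → V), ∃ P : MvPolynomial (Fin m) k, P.totalDegree ≤ d ∧
    ∀ c : Fin m → k, g (∑ i, c i • v i) = MvPolynomial.eval c P

/-- If `f : V → W` is such that `φ ∘ f` restricts to a polynomial of degree `≤ d` on every
finite-dimensional subspace of `V` for every linear functional `φ` on `W`, then for every
finite-dimensional subspace `V' ⊆ V` the span of `f(V')` is finite-dimensional, of dimension
at most `dim Sym_{≤ d}((V')^*)`, i.e. the dimension of the space of polynomials of total
degree at most `d` in `dim V'` variables. -/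
theorem stmt4 (k V W : Type) [Field k] [CharZero k]
    [AddCommGroup V] [Module k V] [AddCommGroup W] [Module k W]
    (d : ℕ) (f : V → W)
    (hf : ∀ φ : W →ₗ[k] k, RestrictsToPolyDeg k d (φ ∘ f)) :
    ∀ V' : Submodule k V, FiniteDimensional k V' →
      FiniteDimensional k (Submodule.span k (f '' (V' : Set V))) ∧
      Module.finrank k (Submodule.span k (f '' (V' : Set V))) ≤
        Module.finrank k
          (MvPolynomial.restrictTotalDegree (Fin (Module.finrank k V')) k d) := by
  intro V' hV'
  classical
  set n := Module.finrank k V' with hn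
  set N := Module.finrank k (MvPolynomial.restrictTotalDegree (Fin n) k d) with hN
  let b := Module.finBasis k V'
  let v : Fin n → V := fun i => (b i : V)
  -- Key claim: any linearly independent finset inside f '' V' has card ≤ N
  have key : ∀ u : Finset W, (u : Set W) ⊆ f '' (V' : Set V) →
      LinearIndependent k (fun x : {y // y ∈ (u : Set W)} => (x : W)) → u.card ≤ N := by
    intro u hu hli
    replace hli := linearIndependent_subtype_iff.mp hli
    set B := Module.Basis.extend hli with hB
    have hsub : (u : Set W) ⊆ hli.extend (Set.subset_univ _) := hli.subset_extend _
    let idx : {y // y ∈ (u : Set W)} → hli.extend (Set.subset_univ _) := fun x => ⟨x.1, hsub x.2⟩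
    let φ : {y // y ∈ (u : Set W)} → (W →ₗ[k] k) := fun x => B.coord (idx x)
    -- polynomials
    have hP : ∀ x : {y // y ∈ (u : Set W)}, ∃ P : MvPolynomial (Fin n) k, P.totalDegree ≤ d ∧
        ∀ c : Fin n → k, (φ x) (f (∑ i, c i • v i)) = MvPolynomial.eval c P := fun x =>
      hf (φ x) n v
    choose P hPd hPe using hP
    let Q : {y // y ∈ (u : Set W)} → MvPolynomial.restrictTotalDegree (Fin n) k d := fun x =>
      ⟨P x, (MvPolynomial.mem_restrictTotalDegree _ _ _).2 (hPd x)⟩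
    have hQli : LinearIndependent k Q := by
      rw [Fintype.linearIndependent_iff]
      intro g h0 y
      -- get the preimage of y
      obtain ⟨z, hz, hfz⟩ := hu y.2
      let zz : V' := ⟨z, hz⟩
      let c : Fin n → k := fun i => b.repr zz i
      have hsum : ∑ i, c i • v i = z := by
        have := b.sum_repr zz
        calc ∑ i, c i • v i = ((∑ i, c i • b i : V') : V) := by
              push_cast; rfl
          _ = z := by rw [this]
      -- coerce h0 to polynomials and evaluate at c
      have h0' : ∑ x, g x • P x = 0 := by
        have := congrArg (Subtype.val) h0
        simpa using this
      have heval := congrArg (MvPolynomial.eval c) h0'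
      rw [map_sum, map_zero] at heval
      have hterm : ∀ x : {y // y ∈ (u : Set W)},
          MvPolynomial.eval c (g x • P x) = g x * (if x = y then 1 else 0) := by
        intro x
        rw [MvPolynomial.smul_eval, ← hPe x c, hsum, hfz]
        congr 1
        have hy : (y : W) = B (idx y) := (Module.Basis.extend_apply_self hli (idx y)).symm
        rw [hy]
        show B.coord (idx x) (B (idx y)) = _
        rw [Module.Basis.coord_apply, Module.Basis.repr_self, Finsupp.single_apply]
        congr 1
        simp only [eq_iff_iff]
        constructor
        · intro h
          have h1 : ((idx y : {w // w ∈ hli.extend (Set.subset_univ _)}) : W)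
              = ((idx x : {w // w ∈ hli.extend (Set.subset_univ _)}) : W) :=
            Subtype.ext_iff.mp h
          have h2 : (y : W) = (x : W) := h1
          exact (Subtype.ext h2).symm
        · intro h; rw [h]
      rw [Finset.sum_congr rfl (fun x _ => hterm x)] at heval
      simpa using heval
    have := hQli.fintype_card_le_finrank
    simpa [Fintype.card_coe] using this
  obtain ⟨t, hts, hspan, hli⟩ := exists_linearIndependent k (f '' (V' : Set V))
  have htfin : t.Finite := by
    by_contra hinf
    obtain ⟨t', ht't, ht'c⟩ := Set.Infinite.exists_subset_card_eq hinf (N + 1)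
    have hli' : LinearIndependent k (fun x : {y // y ∈ (t' : Set W)} => (x : W)) :=
      linearIndependent_subtype_iff.mpr ((linearIndependent_subtype_iff.mp hli).mono ht't)
    have := key t' (ht't.trans hts) hli'
    omega
  have hcoe : (htfin.toFinset : Set W) = t := htfin.coe_toFinset
  have hcard : htfin.toFinset.card ≤ N := by
    apply key
    · rw [hcoe]; exact hts
    · apply linearIndependent_subtype_iff.mpr ((linearIndependent_subtype_iff.mp hli).mono _); rw [hcoe]
  have hspan' : Submodule.span k (htfin.toFinset : Set W) =
      Submodule.span k (f '' (V' : Set V)) := by rw [hcoe, hspan]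
  constructor
  · rw [← hspan']
    exact FiniteDimensional.span_finset k htfin.toFinset
  · rw [← hspan']
    exact le_trans (finrank_span_finset_le_card htfin.toFinset) hcard
end

section
/- Let f ∈ k[x₁,…,xₙ] with char k = 0. Then the quotient algebra A = k[∂₁,…,∂ₙ]/Ann(f) carries a non-degenerate pairing given by the linear functional ℓ(D) := (D·f)(0): the bilinear form ⟨D₁, D₂⟩ = (D₁D₂·f)(0) on A is well-defined and non-degenerate. -/
open MvPolynomial

/-- The differential operator corresponding to a monomial in `k[∂₁,…,∂ₙ]`. -/
noncomputable def Dmon (k : Type) [Field k] (n : ℕ) (m : Fin n →₀ ℕ) :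
    Module.End k (MvPolynomial (Fin n) k) :=
  (List.ofFn fun i : Fin n =>
    ((pderiv i).toLinearMap : Module.End k (MvPolynomial (Fin n) k)) ^ (m i)).prod

/-- The constant-coefficient differential operator `D ∈ k[∂₁,…,∂ₙ]` (encoded as a
polynomial in `k[x₁,…,xₙ]`) acting on `k[x₁,…,xₙ]`. -/
noncomputable def diffOp {k : Type} [Field k] {n : ℕ} (D : MvPolynomial (Fin n) k) :
    Module.End k (MvPolynomial (Fin n) k) :=
  (AddMonoidAlgebra.coeff D).sum fun m c => c • Dmon k n m

namespace Stmt16Aux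

variable {k : Type} [Field k] {n : ℕ}

lemma descFactorial_add' (N a b : ℕ) :
    N.descFactorial (a + b) = N.descFactorial b * (N - b).descFactorial a := by
  induction a with
  | zero => simp
  | succ a ih =>
    have h : a + 1 + b = (a + b) + 1 := by ring
    rw [h, Nat.descFactorial_succ, ih, Nat.descFactorial_succ,
      Nat.add_comm a b, ← Nat.sub_sub]
    ring

lemma pow_pderiv_monomial (i : Fin n) (c : ℕ) (s : Fin n →₀ ℕ) (a : k) :
    (((pderiv i).toLinearMap : Module.End k (MvPolynomial (Fin n) k)) ^ c) (monomial s a)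
      = monomial (s - Finsupp.single i c) (a * ((s i).descFactorial c : k)) := by
  induction c with
  | zero => simp
  | succ c ih =>
    rw [pow_succ', Module.End.mul_apply, ih]
    have happ : ((pderiv i).toLinearMap : Module.End k (MvPolynomial (Fin n) k))
        (monomial (s - Finsupp.single i c) (a * ((s i).descFactorial c : k)))
        = pderiv i (monomial (s - Finsupp.single i c) (a * ((s i).descFactorial c : k))) := rfl
    rw [happ, pderiv_monomial]
    have h1 : (s - Finsupp.single i c) i = s i - c := by
      simp [Finsupp.tsub_apply]
    have h2 : s - Finsupp.single i c - Finsupp.single i 1 = s - Finsupp.single i (c + 1) := by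
      rw [tsub_tsub, ← Finsupp.single_add]
    rw [h1, h2]
    congr 1
    rw [Nat.descFactorial_succ]
    push_cast
    ring

lemma listProd_pderiv_pow_monomial (L : List (Fin n)) (hL : L.Nodup) (g : Fin n → ℕ)
    (s : Fin n →₀ ℕ) (a : k) :
    ((L.map fun i =>
        ((pderiv i).toLinearMap : Module.End k (MvPolynomial (Fin n) k)) ^ g i).prod)
        (monomial s a)
      = monomial (s - ∑ i ∈ L.toFinset, Finsupp.single i (g i))
          (a * ((∏ i ∈ L.toFinset, (s i).descFactorial (g i) : ℕ) : k)) := by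
  induction L with
  | nil => simp
  | cons i L ih =>
    have hi : i ∉ L := (List.nodup_cons.mp hL).1
    have hL' : L.Nodup := (List.nodup_cons.mp hL).2
    have hiF : i ∉ L.toFinset := by simpa using hi
    rw [List.map_cons, List.prod_cons, Module.End.mul_apply, ih hL', pow_pderiv_monomial]
    have hT : (s - ∑ j ∈ L.toFinset, Finsupp.single j (g j)) i = s i := by
      rw [Finsupp.tsub_apply]
      have : (∑ j ∈ L.toFinset, Finsupp.single j (g j)) i = 0 := by
        rw [Finsupp.finset_sum_apply]
        refine Finset.sum_eq_zero fun j hj => ?_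
        rw [Finsupp.single_apply, if_neg]
        intro h; exact hiF (h ▸ hj)
      rw [this, Nat.sub_zero]
    rw [hT]
    rw [List.toFinset_cons, Finset.sum_insert hiF, Finset.prod_insert hiF]
    congr 1
    · rw [tsub_tsub, add_comm]
    · push_cast
      ring

lemma Dmon_monomial (m s : Fin n →₀ ℕ) (a : k) :
    Dmon k n m (monomial s a)
      = monomial (s - m) (a * ((∏ i, (s i).descFactorial (m i) : ℕ) : k)) := by
  have hm : (∑ i ∈ (List.finRange n).toFinset, Finsupp.single i (m i)) = m := by
    ext j
    rw [Finsupp.finset_sum_apply]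
    simp [Finsupp.single_apply]
  rw [Dmon, List.ofFn_eq_map,
    listProd_pderiv_pow_monomial _ (List.nodup_finRange n) _ s a, hm,
    List.toFinset_finRange]

lemma Dmon_mul (m m' : Fin n →₀ ℕ) :
    Dmon k n (m + m') = Dmon k n m * Dmon k n m' := by
  apply LinearMap.ext
  intro p
  induction p using MvPolynomial.induction_on' with
  | add p q hp hq => rw [map_add, hp, hq, Module.End.mul_apply, Module.End.mul_apply,
      map_add, ← Module.End.mul_apply (Dmon k n m), ← Module.End.mul_apply (Dmon k n m)]
  | monomial s a =>
    rw [Module.End.mul_apply, Dmon_monomial, Dmon_monomial, Dmon_monomial]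
    have he : s - m' - m = s - (m + m') := by rw [tsub_tsub, add_comm]
    have hc : ∏ i, (s i).descFactorial (m i + m' i)
        = ∏ i, ((s i).descFactorial (m' i) * ((s - m') i).descFactorial (m i)) := by
      refine Finset.prod_congr rfl fun i _ => ?_
      rw [Finsupp.tsub_apply, descFactorial_add']
    rw [he]
    congr 1
    have hsum : ∀ j, (m + m') j = m j + m' j := fun j => rfl
    simp only [Finsupp.add_apply]
    rw [hc, Finset.prod_mul_distrib]
    push_cast
    ring

lemma diffOp_monomial (m : Fin n →₀ ℕ) (c : k) :
    diffOp (monomial m c) = c • Dmon k n m := by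
  rw [diffOp]
  exact Finsupp.sum_single_index (by simp)

lemma diffOp_add (D D' : MvPolynomial (Fin n) k) :
    diffOp (D + D') = diffOp D + diffOp D' := by
  rw [diffOp, diffOp, diffOp, AddMonoidAlgebra.coeff_add]
  exact Finsupp.sum_add_index' (by simp) (by intro m c c'; rw [add_smul])

lemma diffOp_smul (c : k) (D : MvPolynomial (Fin n) k) :
    diffOp (c • D) = c • diffOp D := by
  rw [diffOp, diffOp, AddMonoidAlgebra.coeff_smul, Finsupp.sum_smul_index (fun m => by simp), Finsupp.smul_sum]
  refine Finsupp.sum_congr fun m _ => ?_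
  rw [mul_smul]

lemma diffOp_mul (D₁ D₂ : MvPolynomial (Fin n) k) :
    diffOp (D₁ * D₂) = diffOp D₁ * diffOp D₂ := by
  induction D₁ using MvPolynomial.induction_on' with
  | add p q hp hq => rw [add_mul, diffOp_add, diffOp_add, hp, hq, add_mul]
  | monomial m c =>
    induction D₂ using MvPolynomial.induction_on' with
    | add p q hp hq => rw [mul_add, diffOp_add, diffOp_add, hp, hq, mul_add]
    | monomial m' c' =>
      rw [monomial_mul, diffOp_monomial, diffOp_monomial, diffOp_monomial, Dmon_mul,
        smul_mul_smul_comm]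

lemma constantCoeff_Dmon (m : Fin n →₀ ℕ) (g : MvPolynomial (Fin n) k) :
    constantCoeff (Dmon k n m g) = coeff m g * ((∏ i, Nat.factorial (m i) : ℕ) : k) := by
  conv_lhs => rw [g.as_sum, map_sum, map_sum]
  have hterm : ∀ s : Fin n →₀ ℕ,
      constantCoeff (Dmon k n m (monomial s (coeff s g)))
        = if s - m = 0 then coeff s g * ((∏ i, (s i).descFactorial (m i) : ℕ) : k) else 0 := by
    intro s
    rw [Dmon_monomial, constantCoeff_monomial]
  rw [Finset.sum_congr rfl fun s _ => hterm s]
  rw [Finset.sum_eq_single m ?_ ?_]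
  · rw [if_pos (by simp)]
    congr 2
    exact Finset.prod_congr rfl fun i _ => Nat.descFactorial_self (m i)
  · intro s _ hs
    by_cases h : s - m = 0
    · rw [if_pos h]
      have hle : s ≤ m := tsub_eq_zero_iff_le.mp h
      have hex : ∃ i, s i < m i := by
        by_contra hc
        push_neg at hc
        exact hs (Finsupp.ext fun i => le_antisymm (hle i) (hc i))
      obtain ⟨i, hi⟩ := hex
      have : ∏ j, (s j).descFactorial (m j) = 0 :=
        Finset.prod_eq_zero (Finset.mem_univ i)
          (Nat.descFactorial_eq_zero_iff_lt.mpr hi)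
      rw [this]
      simp
    · rw [if_neg h]
  · intro hm
    rw [MvPolynomial.notMem_support_iff.mp hm]
    simp

lemma prod_factorial_ne_zero [CharZero k] (m : Fin n →₀ ℕ) :
    ((∏ i, Nat.factorial (m i) : ℕ) : k) ≠ 0 := by
  exact Nat.cast_ne_zero.mpr
    (Finset.prod_pos fun i _ => Nat.factorial_pos (m i)).ne'

/-- The annihilator ideal of `f`. -/
noncomputable def annI (k : Type) [Field k] (n : ℕ) (f : MvPolynomial (Fin n) k) :
    Ideal (MvPolynomial (Fin n) k) where
  carrier := {D | diffOp D f = 0}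
  zero_mem' := by
    show diffOp 0 f = 0
    have : diffOp (0 : MvPolynomial (Fin n) k) = 0 := by
      rw [diffOp, AddMonoidAlgebra.coeff_zero]; exact Finsupp.sum_zero_index
    rw [this]; rfl
  add_mem' := by
    intro a b ha hb
    show diffOp (a + b) f = 0
    rw [diffOp_add, LinearMap.add_apply, ha, hb, add_zero]
  smul_mem' := by
    intro c x hx
    show diffOp (c * x) f = 0
    rw [diffOp_mul, Module.End.mul_apply, hx, map_zero]

lemma mem_annI {f D : MvPolynomial (Fin n) k} : D ∈ annI k n f ↔ diffOp D f = 0 := Iff.rfl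

/-- The linear functional `ℓ(D) = (D·f)(0)`. -/
noncomputable def ellL (f : MvPolynomial (Fin n) k) : MvPolynomial (Fin n) k →ₗ[k] k where
  toFun D := constantCoeff (diffOp D f)
  map_add' D D' := by
    show constantCoeff (diffOp (D + D') f) = _
    rw [diffOp_add, LinearMap.add_apply, map_add]
  map_smul' c D := by
    show constantCoeff (diffOp (c • D) f) = _
    rw [diffOp_smul, LinearMap.smul_apply, RingHom.id_apply, constantCoeff_smul, smul_eq_mul]

/-- Lift a `k`-linear map vanishing on an ideal to the quotient. -/
noncomputable def qlift {N : Type} [AddCommGroup N] [Module k N]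
    (I : Ideal (MvPolynomial (Fin n) k)) (g : MvPolynomial (Fin n) k →ₗ[k] N)
    (hg : ∀ D ∈ I, g D = 0) : (MvPolynomial (Fin n) k ⧸ I) →ₗ[k] N :=
  ((I.restrictScalars k).liftQ g fun D hD => LinearMap.mem_ker.mpr (hg D hD)) ∘ₗ
    ((Submodule.Quotient.restrictScalarsEquiv k I).symm : _ →ₗ[k] _)

@[simp] lemma qlift_mk {N : Type} [AddCommGroup N] [Module k N]
    (I : Ideal (MvPolynomial (Fin n) k)) (g : MvPolynomial (Fin n) k →ₗ[k] N)
    (hg : ∀ D ∈ I, g D = 0) (D : MvPolynomial (Fin n) k) :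
    qlift I g hg (Ideal.Quotient.mk I D) = g D := rfl

end Stmt16Aux

open Stmt16Aux in
/-- For `f ∈ k[x₁,…,xₙ]` (char `k = 0`), the quotient `k[∂₁,…,∂ₙ]/Ann(f)` carries a
well-defined non-degenerate pairing `⟨D₁,D₂⟩ = (D₁D₂·f)(0)` given by the linear
functional `ℓ(D) = (D·f)(0)`. -/
theorem stmt16 (k : Type) [Field k] [CharZero k] (n : ℕ) (f : MvPolynomial (Fin n) k) :
    ∃ I : Ideal (MvPolynomial (Fin n) k),
      (I : Set (MvPolynomial (Fin n) k))
        = {D : MvPolynomial (Fin n) k | diffOp D f = 0} ∧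
      ∃ Bq : (MvPolynomial (Fin n) k ⧸ I) →ₗ[k] (MvPolynomial (Fin n) k ⧸ I) →ₗ[k] k,
        (∀ D₁ D₂ : MvPolynomial (Fin n) k,
          Bq (Ideal.Quotient.mk I D₁) (Ideal.Quotient.mk I D₂)
            = MvPolynomial.constantCoeff (diffOp (D₁ * D₂) f)) ∧
        (∀ a : MvPolynomial (Fin n) k ⧸ I, a ≠ 0 → ∃ b, Bq a b ≠ 0) := by
  classical
  set I := annI k n f with hIdef
  refine ⟨I, rfl, ?_⟩
  -- the bilinear form on the polynomial ring
  have hI0 : ∀ D ∈ I, ellL f D = 0 := by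
    intro D hD
    show constantCoeff (diffOp D f) = 0
    rw [mem_annI.mp hD, map_zero]
  let B : MvPolynomial (Fin n) k →ₗ[k] MvPolynomial (Fin n) k →ₗ[k] k :=
    LinearMap.mk₂ k (fun D₁ D₂ => ellL f (D₁ * D₂))
      (fun x y z => by simp only [add_mul, map_add])
      (fun c x y => by simp only [smul_mul_assoc, map_smul, smul_eq_mul])
      (fun x y z => by simp only [mul_add, map_add])
      (fun c x y => by simp only [mul_smul_comm, map_smul, smul_eq_mul])
  have hBr : ∀ D₁, ∀ D₂ ∈ I, B D₁ D₂ = 0 := fun D₁ D₂ h =>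
    hI0 _ (Ideal.mul_mem_left I D₁ h)
  let Φ : MvPolynomial (Fin n) k →ₗ[k] ((MvPolynomial (Fin n) k ⧸ I) →ₗ[k] k) :=
    { toFun := fun D₁ => qlift I (B D₁) (hBr D₁)
      map_add' := by
        intro D D'
        apply LinearMap.ext
        intro a
        obtain ⟨E, rfl⟩ := Ideal.Quotient.mk_surjective a
        simp [map_add]
      map_smul' := by
        intro c D
        apply LinearMap.ext
        intro a
        obtain ⟨E, rfl⟩ := Ideal.Quotient.mk_surjective a
        simp [map_smul] }
  have hΦ : ∀ D ∈ I, Φ D = 0 := by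
    intro D hD
    apply LinearMap.ext
    intro a
    obtain ⟨E, rfl⟩ := Ideal.Quotient.mk_surjective a
    show B D E = 0
    exact hI0 _ (Ideal.mul_mem_right E I hD)
  refine ⟨qlift I Φ hΦ, fun D₁ D₂ => rfl, ?_⟩
  intro a ha
  obtain ⟨D, rfl⟩ := Ideal.Quotient.mk_surjective a
  have hD : D ∉ I := fun h => ha (Ideal.Quotient.eq_zero_iff_mem.mpr h)
  have hg : diffOp D f ≠ 0 := fun h => hD (mem_annI.mpr h)
  obtain ⟨m, hm⟩ := MvPolynomial.support_nonempty.mpr hg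
  refine ⟨Ideal.Quotient.mk I (monomial m 1), ?_⟩
  have hcalc : qlift I Φ hΦ (Ideal.Quotient.mk I D) (Ideal.Quotient.mk I (monomial m 1))
      = constantCoeff (diffOp (D * monomial m 1) f) := rfl
  rw [hcalc]
  have h1 : diffOp (D * monomial m 1) f = Dmon k n m (diffOp D f) := by
    rw [mul_comm, diffOp_mul, Module.End.mul_apply, diffOp_monomial, one_smul]
  rw [h1, constantCoeff_Dmon]
  exact mul_ne_zero (MvPolynomial.mem_support_iff.mp hm) (prod_factorial_ne_zero m)
end

section
/- Let char k = 0 and let f : kⁿ → k be a homogeneous polynomial of degree d. Then Ann(f) = {D ∈ k[∂₁,…,∂ₙ] | D·f = 0} is a homogeneous ideal, and the graded quotient algebra A = k[∂₁,…,∂ₙ]/Ann(f) = ⊕_{i=0}^d Aᵢ satisfies A_d ≅ k (provided f ≠ 0) and the multiplication pairing Aᵢ × A_{d−i} → A_d is non-degenerate for all 0 ≤ i ≤ d. -/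
open MvPolynomial

variable {k : Type} [Field k] {n : ℕ}

private lemma pderiv_pow_monomial (i : Fin n) (e : ℕ) (s : Fin n →₀ ℕ) (c : k) :
    (((pderiv i).toLinearMap : Module.End k (MvPolynomial (Fin n) k)) ^ e) (monomial s c)
      = monomial (s - Finsupp.single i e) (c * (s i).descFactorial e) := by
  induction e with
  | zero => simp
  | succ e ih =>
    rw [pow_succ', Module.End.mul_apply, ih]
    have : ((pderiv i).toLinearMap : Module.End k (MvPolynomial (Fin n) k)) (monomial (s - Finsupp.single i e) (c * (s i).descFactorial e)) = pderiv i (monomial (s - Finsupp.single i e) (c * (s i).descFactorial e)) := rfl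
    rw [this, pderiv_monomial]
    have h2 : s - Finsupp.single i e - Finsupp.single i 1 = s - Finsupp.single i (e+1) := by
      rw [tsub_tsub, ← Finsupp.single_add]
    have h3 : (s - Finsupp.single i e) i = s i - e := by
      rw [Finsupp.tsub_apply, Finsupp.single_eq_same]
    rw [h2, h3, Nat.descFactorial_succ]
    push_cast
    ring_nf

private lemma pderiv_comm' (i j : Fin n) (p : MvPolynomial (Fin n) k) :
    pderiv i (pderiv j p) = pderiv j (pderiv i p) := by
  rcases eq_or_ne i j with rfl | hij
  · rfl
  induction p using MvPolynomial.induction_on' with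
  | add p q hp hq => simp [hp, hq]
  | monomial s c =>
    simp only [pderiv_monomial]
    have hji : j ≠ i := hij.symm
    rw [Finsupp.tsub_apply, Finsupp.tsub_apply, Finsupp.single_eq_of_ne hij,
      Finsupp.single_eq_of_ne hji, tsub_right_comm]
    congr 1
    simp only [Nat.sub_zero]
    ring

private lemma commP (i j : Fin n) :
    Commute ((pderiv i).toLinearMap : Module.End k (MvPolynomial (Fin n) k))
      (pderiv j).toLinearMap :=
  LinearMap.ext fun p => pderiv_comm' i j p

private lemma dmon_eq_noncommProd (m : Fin n →₀ ℕ) :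
    Dmon k n m = Finset.univ.noncommProd
      (fun i => ((pderiv i).toLinearMap : Module.End k (MvPolynomial (Fin n) k)) ^ (m i))
      (fun x _ y _ _ => (commP x y).pow_pow _ _) := by
  unfold Finset.noncommProd
  have key : ∀ (s : Multiset (Module.End k (MvPolynomial (Fin n) k))) (h)
      (_ : s = ↑(List.ofFn fun i : Fin n =>
        ((pderiv i).toLinearMap : Module.End k (MvPolynomial (Fin n) k)) ^ (m i))),
      s.noncommProd h = Dmon k n m := by
    rintro s h rfl
    exact Multiset.noncommProd_coe _ _
  exact (key _ _ (Fin.univ_val_map _)).symm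

private lemma noncommProd_monomial (m : Fin n →₀ ℕ) (s0 : Finset (Fin n))
    (t : Fin n →₀ ℕ) (c : k) :
    (s0.noncommProd
      (fun i => ((pderiv i).toLinearMap : Module.End k (MvPolynomial (Fin n) k)) ^ (m i))
      (fun x _ y _ _ => (commP x y).pow_pow _ _)) (monomial t c)
      = monomial (t - ∑ i ∈ s0, Finsupp.single i (m i))
          (c * ∏ i ∈ s0, ((t i).descFactorial (m i) : k)) := by
  induction s0 using Finset.induction_on with
  | empty => exact (congrArg (fun F : Module.End k (MvPolynomial (Fin n) k) => F (monomial t c)) (Finset.noncommProd_empty _ _)).trans (by simp)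
  | insert _ _ hj =>
    rename_i j s0 ih
    refine (congrArg (fun F : Module.End k (MvPolynomial (Fin n) k) => F (monomial t c)) (Finset.noncommProd_insert_of_notMem _ _ _ _ hj)).trans ?_
    rw [Module.End.mul_apply, ih,
      pderiv_pow_monomial, Finset.sum_insert hj, Finset.prod_insert hj]
    congr 1
    · rw [tsub_tsub, add_comm]
    · have h4 : (t - ∑ i ∈ s0, Finsupp.single i (m i)) j = t j := by
        rw [Finsupp.tsub_apply, Finset.sum_apply']
        rw [Finset.sum_eq_zero (fun i hi => Finsupp.single_eq_of_ne (by rintro rfl; exact hj hi))]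
        simp
      rw [h4]
      ring

private lemma Dmon_monomial (m t : Fin n →₀ ℕ) (c : k) :
    Dmon k n m (monomial t c)
      = monomial (t - m) (c * ∏ i, ((t i).descFactorial (m i) : k)) := by
  rw [dmon_eq_noncommProd, noncommProd_monomial, Finsupp.univ_sum_single]

private lemma Dmon_add (a b : Fin n →₀ ℕ) :
    Dmon k n (a + b) = Dmon k n a * Dmon k n b := by
  rw [dmon_eq_noncommProd a, dmon_eq_noncommProd b, dmon_eq_noncommProd (a + b),
    ← Finset.noncommProd_mul_distrib _ _
      (fun x _ y _ _ => (commP x y).pow_pow _ _)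
      (fun x _ y _ _ => (commP x y).pow_pow _ _)
      (fun x _ y _ _ => (commP x y).pow_pow _ _)]
  apply Finset.noncommProd_congr rfl
  intro x _
  rw [Pi.mul_apply, Finsupp.add_apply, pow_add]

private lemma diffOp_monomial (m : Fin n →₀ ℕ) (c : k) :
    diffOp (monomial m c) = c • Dmon k n m := by
  rw [diffOp, ← single_eq_monomial]
  exact Finsupp.sum_single_index (by simp)

private lemma diffOp_eq_sum (D : MvPolynomial (Fin n) k) :
    diffOp D = ∑ m ∈ D.support, coeff m D • Dmon k n m := rfl

private lemma diffOp_eq_sum_of_subset {D : MvPolynomial (Fin n) k} {s : Finset (Fin n →₀ ℕ)}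
    (hs : D.support ⊆ s) :
    diffOp D = ∑ m ∈ s, coeff m D • Dmon k n m := by
  rw [diffOp_eq_sum]
  exact Finset.sum_subset hs fun m _ hm => by
    rw [MvPolynomial.notMem_support_iff.mp hm, zero_smul]

private lemma diffOp_add (D E : MvPolynomial (Fin n) k) :
    diffOp (D + E) = diffOp D + diffOp E := by
  rw [diffOp_eq_sum_of_subset (MvPolynomial.support_add (p := D) (q := E)),
    diffOp_eq_sum_of_subset (Finset.subset_union_left (s₁ := D.support) (s₂ := E.support)),
    diffOp_eq_sum_of_subset (Finset.subset_union_right (s₁ := D.support) (s₂ := E.support)),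
    ← Finset.sum_add_distrib]
  exact Finset.sum_congr rfl fun m _ => by rw [coeff_add, add_smul]

private lemma diffOp_sum {ι : Type} (s : Finset ι) (g : ι → MvPolynomial (Fin n) k) :
    diffOp (∑ i ∈ s, g i) = ∑ i ∈ s, diffOp (g i) := by
  induction s using Finset.cons_induction with
  | empty => simp [diffOp]
  | cons a s ha ih => rw [Finset.sum_cons, Finset.sum_cons, diffOp_add, ih]

private lemma constantCoeff_Dmon (m : Fin n →₀ ℕ) (p : MvPolynomial (Fin n) k) :
    constantCoeff (Dmon k n m p) = (∏ i, ((m i).factorial : k)) * coeff m p := by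
  induction p using MvPolynomial.induction_on' with
  | add p q hp hq => simp [map_add, hp, hq, mul_add]
  | monomial t c =>
    rw [Dmon_monomial, constantCoeff_monomial, coeff_monomial]
    rcases eq_or_ne t m with rfl | htm
    · rw [if_pos (tsub_self t), if_pos rfl]
      simp only [Nat.descFactorial_self]
      ring
    · rw [if_neg htm, mul_zero]
      by_cases h0 : t - m = 0
      · rw [if_pos h0]
        have hle : t ≤ m := tsub_eq_zero_iff_le.mp h0
        obtain ⟨i, hi⟩ : ∃ i, t i ≠ m i := by
          by_contra hc
          push_neg at hc
          exact htm (Finsupp.ext hc)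
        have hlt : t i < m i := lt_of_le_of_ne (hle i) hi
        rw [Finset.prod_eq_zero (Finset.mem_univ i)
          (by rw [Nat.descFactorial_of_lt hlt]; exact Nat.cast_zero)]
        ring
      · rw [if_neg h0]

private lemma diffOp_apply (D f : MvPolynomial (Fin n) k) :
    diffOp D f = ∑ m ∈ D.support, coeff m D • Dmon k n m f := by
  rw [diffOp_eq_sum, LinearMap.coe_sum, Finset.sum_apply]
  rfl

private lemma degree_sub_of_le {m s : Fin n →₀ ℕ} (h : m ≤ s) :
    (s - m).degree = s.degree - m.degree ∧ m.degree ≤ s.degree := by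
  have hadd : (s - m) + m = s := tsub_add_cancel_of_le h
  have hdeg : ∀ u v : Fin n →₀ ℕ, (u + v).degree = u.degree + v.degree := by
    intro u v
    simp only [Finsupp.degree_eq_weight_one]
    exact map_add _ _ _
  have h2 : (s - m).degree + m.degree = s.degree := by rw [← hdeg, hadd]
  omega

private lemma le_of_descFactorial_ne_zero {m s : Fin n →₀ ℕ}
    (h : ∀ i : Fin n, ((s i).descFactorial (m i) : k) ≠ 0) : m ≤ s := by
  intro i
  have h1 : (s i).descFactorial (m i) ≠ 0 := fun h0 => (h i) (by rw [h0, Nat.cast_zero])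
  rw [Ne, Nat.descFactorial_eq_zero_iff_lt] at h1
  omega

private lemma Dmon_isHomogeneous {m : Fin n →₀ ℕ} {f : MvPolynomial (Fin n) k} {d : ℕ}
    (hf : f.IsHomogeneous d) : (Dmon k n m f).IsHomogeneous (d - m.degree) := by
  conv_lhs => rw [← f.support_sum_monomial_coeff, map_sum]
  apply IsHomogeneous.sum
  intro s hs
  rw [Dmon_monomial]
  by_cases hz : (coeff s f * ∏ i, ((s i).descFactorial (m i) : k)) = 0
  · rw [hz, monomial_zero]
    exact isHomogeneous_zero _ _ _
  · have hc : coeff s f ≠ 0 := fun h => hz (by rw [h, zero_mul])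
    have hprod : ∀ i : Fin n, ((s i).descFactorial (m i) : k) ≠ 0 := by
      intro i hi
      exact hz (by rw [Finset.prod_eq_zero (Finset.mem_univ i) hi, mul_zero])
    have hle : m ≤ s := le_of_descFactorial_ne_zero hprod
    have hsd : s.degree = d := by
      by_contra hne
      exact hc (hf.coeff_eq_zero hne)
    obtain ⟨h1, _⟩ := degree_sub_of_le hle
    exact isHomogeneous_monomial _ (by rw [h1, hsd])

private lemma Dmon_apply_eq_zero {m : Fin n →₀ ℕ} {f : MvPolynomial (Fin n) k} {d : ℕ}
    (hf : f.IsHomogeneous d) (hm : d < m.degree) : Dmon k n m f = 0 := by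
  conv_lhs => rw [← f.support_sum_monomial_coeff, map_sum]
  apply Finset.sum_eq_zero
  intro s hs
  rw [Dmon_monomial]
  have hsd : s.degree = d := by
    by_contra hne
    exact (MvPolynomial.mem_support_iff.mp hs) (hf.coeff_eq_zero hne)
  obtain ⟨i, hi⟩ : ∃ i : Fin n, s i < m i := by
    by_contra hc
    push_neg at hc
    obtain ⟨_, h2⟩ := degree_sub_of_le (fun i => hc i)
    omega
  rw [Finset.prod_eq_zero (Finset.mem_univ i)
    (by rw [Nat.descFactorial_of_lt hi]; exact Nat.cast_zero), mul_zero, monomial_zero]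

private lemma diffOp_isHomogeneous {D f : MvPolynomial (Fin n) k} {i d : ℕ}
    (hD : D.IsHomogeneous i) (hf : f.IsHomogeneous d) :
    (diffOp D f).IsHomogeneous (d - i) := by
  rw [diffOp_apply]
  apply IsHomogeneous.sum
  intro m hm
  have hmd : m.degree = i := by
    by_contra hne
    exact (MvPolynomial.mem_support_iff.mp hm) (hD.coeff_eq_zero hne)
  have := Dmon_isHomogeneous (m := m) hf
  rw [hmd] at this
  exact (homogeneousSubmodule (Fin n) k (d - i)).smul_mem _ this

private lemma diffOp_apply_eq_zero {D f : MvPolynomial (Fin n) k} {i d : ℕ}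
    (hD : D.IsHomogeneous i) (hf : f.IsHomogeneous d) (hid : d < i) :
    diffOp D f = 0 := by
  rw [diffOp_apply]
  apply Finset.sum_eq_zero
  intro m hm
  have hmd : m.degree = i := by
    by_contra hne
    exact (MvPolynomial.mem_support_iff.mp hm) (hD.coeff_eq_zero hne)
  rw [Dmon_apply_eq_zero hf (by omega), smul_zero]

private lemma diffOp_mul_monomial (D : MvPolynomial (Fin n) k) (m : Fin n →₀ ℕ)
    (f : MvPolynomial (Fin n) k) :
    diffOp (D * monomial m 1) f = Dmon k n m (diffOp D f) := by
  induction D using MvPolynomial.induction_on' with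
  | add p q hp hq =>
    rw [add_mul, diffOp_add, diffOp_add, LinearMap.add_apply, LinearMap.add_apply, map_add,
      hp, hq]
  | monomial t c =>
    rw [monomial_mul, mul_one, diffOp_monomial, diffOp_monomial, LinearMap.smul_apply,
      LinearMap.smul_apply, map_smul, add_comm, Dmon_add, Module.End.mul_apply]

private lemma eq_C_of_isHomogeneous_zero {p : MvPolynomial (Fin n) k}
    (hp : p.IsHomogeneous 0) : p = MvPolynomial.C (constantCoeff p) := by
  ext m
  rw [coeff_C]
  rcases eq_or_ne (0 : Fin n →₀ ℕ) m with rfl | hm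
  · rw [if_pos rfl]
    rfl
  · rw [if_neg hm]
    apply hp.coeff_eq_zero
    rw [Ne, Finsupp.degree_eq_zero_iff]
    exact fun h => hm h.symm

private lemma constantCoeff_Dmon_ne_zero [CharZero k] {m : Fin n →₀ ℕ}
    {g : MvPolynomial (Fin n) k} (h : coeff m g ≠ 0) :
    constantCoeff (Dmon k n m g) ≠ 0 := by
  rw [constantCoeff_Dmon]
  apply mul_ne_zero _ h
  rw [Finset.prod_ne_zero_iff]
  intro i _
  exact Nat.cast_ne_zero.mpr (Nat.factorial_ne_zero _)

/-- For a nonzero homogeneous `f` of degree `d` (char `k = 0`): `Ann(f)` is a homogeneous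
ideal; the top graded component `A_d` of `A = k[∂₁,…,∂ₙ]/Ann(f)` is isomorphic to `k` via
`D ↦ (D·f)(0)` (every degree-`d` operator sends `f` to a constant, and some degree-`d`
operator has `(D·f)(0) ≠ 0`); and the multiplication pairing `Aᵢ × A_{d-i} → A_d ≅ k` is
non-degenerate for each `0 ≤ i ≤ d`. -/
theorem stmt17 (k : Type) [Field k] [CharZero k] (n d : ℕ)
    (f : MvPolynomial (Fin n) k) (hf : f.IsHomogeneous d) (hf0 : f ≠ 0) :
    (∀ D : MvPolynomial (Fin n) k, diffOp D f = 0 →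
      ∀ i : ℕ, diffOp (homogeneousComponent i D) f = 0) ∧
    (∀ D : MvPolynomial (Fin n) k, D.IsHomogeneous d →
      diffOp D f = MvPolynomial.C (MvPolynomial.constantCoeff (diffOp D f))) ∧
    (∃ D : MvPolynomial (Fin n) k, D.IsHomogeneous d ∧
      MvPolynomial.constantCoeff (diffOp D f) ≠ 0) ∧
    (∀ i : ℕ, i ≤ d → ∀ D : MvPolynomial (Fin n) k, D.IsHomogeneous i →
      diffOp D f ≠ 0 → ∃ E : MvPolynomial (Fin n) k, E.IsHomogeneous (d - i) ∧
        MvPolynomial.constantCoeff (diffOp (D * E) f) ≠ 0) := by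
  refine ⟨?_, ?_, ?_, ?_⟩
  · -- homogeneity of the annihilator
    intro D hD j
    set N := D.totalDegree with hN
    by_cases hjN : N < j
    · rw [homogeneousComponent_eq_zero _ D hjN]
      simp [diffOp]
    push_neg at hjN
    by_cases hjd : d < j
    · exact diffOp_apply_eq_zero (homogeneousComponent_isHomogeneous j D) hf hjd
    push_neg at hjd
    by_contra hgj
    obtain ⟨m, hm⟩ := MvPolynomial.ne_zero_iff.mp hgj
    have hhom : ∀ i : ℕ, (diffOp (homogeneousComponent i D) f).IsHomogeneous (d - i) :=
      fun i => diffOp_isHomogeneous (homogeneousComponent_isHomogeneous i D) hf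
    have hmdeg : m.degree = d - j := by
      by_contra hne
      exact hm ((hhom j).coeff_eq_zero hne)
    have hsum : ∑ i ∈ Finset.range (N + 1), diffOp (homogeneousComponent i D) f = 0 := by
      rw [← LinearMap.sum_apply, ← diffOp_sum, sum_homogeneousComponent, hD]
    have hcoeff := congrArg (coeff m) hsum
    rw [coeff_sum, coeff_zero] at hcoeff
    rw [Finset.sum_eq_single j (fun i hi hij => ?_) (fun hji => ?_)] at hcoeff
    · exact hm hcoeff
    · by_cases hid : d < i
      · rw [diffOp_apply_eq_zero (homogeneousComponent_isHomogeneous i D) hf hid, coeff_zero]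
      · push_neg at hid
        apply (hhom i).coeff_eq_zero
        rw [hmdeg]
        omega
    · exact absurd (Finset.mem_range.mpr (by omega)) hji
  · -- degree d operators send f to constants
    intro D hD
    have := diffOp_isHomogeneous hD hf
    rw [Nat.sub_self] at this
    exact eq_C_of_isHomogeneous_zero this
  · -- existence of a non-degenerate pairing witness in degree d
    obtain ⟨m, hm⟩ := MvPolynomial.ne_zero_iff.mp hf0
    have hmdeg : m.degree = d := by
      by_contra hne
      exact hm (hf.coeff_eq_zero hne)
    refine ⟨monomial m 1, isHomogeneous_monomial _ hmdeg, ?_⟩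
    rw [diffOp_monomial, LinearMap.smul_apply, one_smul]
    exact constantCoeff_Dmon_ne_zero hm
  · -- non-degeneracy of the pairing
    intro i hi D hD hDf
    obtain ⟨m, hm⟩ := MvPolynomial.ne_zero_iff.mp hDf
    have hgh : (diffOp D f).IsHomogeneous (d - i) := diffOp_isHomogeneous hD hf
    have hmdeg : m.degree = d - i := by
      by_contra hne
      exact hm (hgh.coeff_eq_zero hne)
    refine ⟨monomial m 1, isHomogeneous_monomial _ hmdeg, ?_⟩
    rw [diffOp_mul_monomial]
    exact constantCoeff_Dmon_ne_zero hm
end
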